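/- arXiv:1912.00764 — 2 statements merged into one kernel-verified Lean document; each statement's English description precedes it below -/
import Mathlib

section
/- For a random variable $y^*$ that is a mixture over a discrete state $s^*$ where conditional on each state the distribution has dispersion (variance over squared mean) at least $d_0 > 1$, and the conditional means are not all equal, the unconditional dispersion of $y^*$ is strictly greater than $d_0$; in particular, if each component is over-dispersed then the mixture is over-dispersed. -/
open MeasureTheory ProbabilityTheory

/-- if each component of a mixture over a discrete state has
dispersion at least `d0 > 1` and the conditional means are not all equal, the
mixture's dispersion is strictly greater than `d0`; in particular the mixture is
over-dispersed. -/
theorem stmt_1 {Ω S : Type*} [MeasureSpace Ω] [IsProbabilityMeasure (ℙ : Measure Ω)]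
    [Fintype S] [MeasurableSpace S] [MeasurableSingletonClass S]
    (s : Ω → S) (y : Ω → ℝ) (hs : Measurable s) (hy : MemLp y 2 ℙ)
    (d0 : ℝ) (hd0 : 1 < d0)
    (hdisp : ∀ k : S, 0 < ℙ (s ⁻¹' {k}) →
      d0 ≤ variance y (ℙ[|s ⁻¹' {k}]) / (∫ ω, y ω ∂(ℙ[|s ⁻¹' {k}])) ^ 2)
    (hne : ∃ j k : S, 0 < ℙ (s ⁻¹' {j}) ∧ 0 < ℙ (s ⁻¹' {k}) ∧
      (∫ ω, y ω ∂(ℙ[|s ⁻¹' {j}])) ≠ ∫ ω, y ω ∂(ℙ[|s ⁻¹' {k}]))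
    (hmean : 0 < ∫ ω, y ω ∂ℙ) :
    d0 < variance y ℙ / (∫ ω, y ω ∂ℙ) ^ 2 ∧
      1 < variance y ℙ / (∫ ω, y ω ∂ℙ) ^ 2 := by
  classical
  set A : S → Set Ω := fun k => s ⁻¹' {k} with hA
  have hAm : ∀ k, MeasurableSet (A k) := fun k => hs (measurableSet_singleton k)
  have hAd : Pairwise (Function.onFun Disjoint A) := by
    intro a b hab
    refine Set.disjoint_left.2 fun ω ha hb => hab ?_
    simp only [A, Set.mem_preimage, Set.mem_singleton_iff] at ha hb
    rw [← ha, ← hb]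
  have hAu : (⋃ k, A k) = Set.univ := by
    ext ω; simp [A]
  set p : S → ℝ := fun k => (ℙ (A k)).toReal with hp
  have hple : ∀ k, ℙ (A k) ≠ ⊤ := fun k => measure_ne_top _ _
  have hp0 : ∀ k, 0 ≤ p k := fun k => ENNReal.toReal_nonneg
  have hpsum : ∑ k, p k = 1 := by
    rw [hp, ← ENNReal.toReal_sum (fun k _ => hple k)]
    have : ∑ k, ℙ (A k) = 1 := by
      rw [← tsum_fintype (L := SummationFilter.unconditional S), ← measure_iUnion hAd hAm, hAu, measure_univ]
    rw [this, ENNReal.toReal_one]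
  set μc : S → Measure Ω := fun k => ℙ[|A k] with hμc
  -- decomposition of integrals
  have key : ∀ f : Ω → ℝ, Integrable f ℙ →
      ∫ ω, f ω ∂ℙ = ∑ k, p k * ∫ ω, f ω ∂(μc k) := by
    intro f hf
    have h1 : ∫ ω, f ω ∂ℙ = ∑ k, ∫ ω in A k, f ω ∂ℙ := by
      rw [← setIntegral_univ, ← hAu, integral_iUnion hAm hAd hf.integrableOn,
        tsum_fintype]
    rw [h1]
    refine Finset.sum_congr rfl fun k _ => ?_
    by_cases hk : ℙ (A k) = 0
    · have : (ℙ : Measure Ω).restrict (A k) = 0 := Measure.restrict_eq_zero.2 hk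
      simp [this, p, hk]
    · have hcd : μc k = (ℙ (A k))⁻¹ • (ℙ : Measure Ω).restrict (A k) := rfl
      rw [hcd, integral_smul_measure, ENNReal.toReal_inv, smul_eq_mul, ← mul_assoc,
        mul_inv_cancel₀ (ENNReal.toReal_ne_zero.2 ⟨hk, hple k⟩), one_mul]
  -- conditional measures are probability measures where p > 0
  have hprob : ∀ k, ℙ (A k) ≠ 0 → IsProbabilityMeasure (μc k) := fun k hk =>
    cond_isProbabilityMeasure hk
  have hyc : ∀ k, ℙ (A k) ≠ 0 → MemLp y 2 (μc k) := fun k hk =>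
    (hy.restrict (A k)).smul_measure (by simp [hk])
  set m : S → ℝ := fun k => ∫ ω, y ω ∂(μc k) with hm
  set M : ℝ := ∫ ω, y ω ∂ℙ with hM
  have hMsum : M = ∑ k, p k * m k := key y (hy.integrable one_le_two)
  have hsq : ∫ ω, y ω ^ 2 ∂ℙ = ∑ k, p k * ∫ ω, y ω ^ 2 ∂(μc k) :=
    key (fun ω => y ω ^ 2) (by simpa using hy.integrable_sq)
  have hvar : variance y ℙ = (∫ ω, y ω ^ 2 ∂ℙ) - M ^ 2 := by
    have := variance_eq_sub hy
    simpa [hM] using this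
  -- pointwise lower bound on conditional second moments
  have hbound : ∀ k, 0 < p k → (d0 + 1) * m k ^ 2 ≤ ∫ ω, y ω ^ 2 ∂(μc k) := by
    intro k hk
    have hk0 : ℙ (A k) ≠ 0 := by
      intro h; rw [hp] at hk; simp [h] at hk
    have hkpos : 0 < ℙ (A k) := pos_iff_ne_zero.2 hk0
    haveI := hprob k hk0
    have hyk := hyc k hk0
    have hvk : variance y (μc k) = (∫ ω, y ω ^ 2 ∂(μc k)) - m k ^ 2 := by
      have := variance_eq_sub hyk
      simpa [hm] using this
    have hd := hdisp k hkpos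
    have hmk : m k ≠ 0 := by
      intro h
      have hd2 : d0 ≤ variance y (μc k) / m k ^ 2 := hd
      rw [h] at hd2
      norm_num at hd2
      linarith
    have hmk2 : 0 < m k ^ 2 := by positivity
    have hd' : d0 ≤ variance y (μc k) / m k ^ 2 := hd
    rw [le_div_iff₀ hmk2] at hd'
    nlinarith [hvk]
  -- variance lower bound
  have hQdef : ∀ k, p k * ((d0 + 1) * m k ^ 2) ≤ p k * ∫ ω, y ω ^ 2 ∂(μc k) := by
    intro k
    rcases lt_or_eq_of_le (hp0 k) with h | h
    · exact mul_le_mul_of_nonneg_left (hbound k h) (le_of_lt h)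
    · rw [← h]; simp
  set Q : ℝ := ∑ k, p k * m k ^ 2 with hQ
  have hVarQ : (d0 + 1) * Q - M ^ 2 ≤ variance y ℙ := by
    have h1 : ∑ k, p k * ((d0 + 1) * m k ^ 2) ≤ ∑ k, p k * ∫ ω, y ω ^ 2 ∂(μc k) :=
      Finset.sum_le_sum fun k _ => hQdef k
    have h2 : ∑ k, p k * ((d0 + 1) * m k ^ 2) = (d0 + 1) * Q := by
      rw [hQ, Finset.mul_sum]
      exact Finset.sum_congr rfl fun k _ => by ring
    rw [hvar, hsq]
    linarith [h2 ▸ h1]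
  -- Jensen gap
  have hgap : ∑ k, p k * (m k - M) ^ 2 = Q - M ^ 2 := by
    have e : ∀ k, p k * (m k - M) ^ 2
        = p k * m k ^ 2 - 2 * M * (p k * m k) + M ^ 2 * p k := fun k => by ring
    rw [Finset.sum_congr rfl fun k _ => e k]
    rw [Finset.sum_add_distrib, Finset.sum_sub_distrib, ← Finset.mul_sum,
      ← Finset.mul_sum, ← hMsum, hpsum, ← hQ]
    ring
  have hgappos : 0 < Q - M ^ 2 := by
    obtain ⟨j, k, hj, hk, hjk⟩ := hne
    have hjm : (∫ ω, y ω ∂ℙ[|s ⁻¹' {j}]) = m j := rfl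
    have hkm : (∫ ω, y ω ∂ℙ[|s ⁻¹' {k}]) = m k := rfl
    rw [hjm, hkm] at hjk
    have hw : ∃ w, 0 < p w ∧ m w ≠ M := by
      by_cases h : m j = M
      · exact ⟨k, ENNReal.toReal_pos hk.ne' (hple k),
          fun hkM => hjk (h.trans hkM.symm)⟩
      · exact ⟨j, ENNReal.toReal_pos hj.ne' (hple j), h⟩
    obtain ⟨w, hwp, hwm⟩ := hw
    rw [← hgap]
    have hterm : 0 < p w * (m w - M) ^ 2 := by
      have hne0 : m w - M ≠ 0 := sub_ne_zero.2 hwm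
      positivity
    refine lt_of_lt_of_le hterm ?_
    refine Finset.single_le_sum (f := fun k => p k * (m k - M) ^ 2)
      (fun k _ => by positivity) (Finset.mem_univ w)
  have hM2 : 0 < M ^ 2 := by positivity
  have hmain : d0 < variance y ℙ / M ^ 2 := by
    rw [lt_div_iff₀ hM2]
    nlinarith
  exact ⟨hmain, lt_trans hd0 hmain⟩
end

section
/- (Bimodality criterion for mixtures, Došlá) Let $f_1, f_2$ be unimodal differentiable densities with modes $M_1 < M_2$, let $\phi(y) = |f_1'(y)/f_2'(y)|$ be continuous on $(M_1, M_2)$ with $\lim_{y\to M_1^+}\phi = 0$ and $\lim_{y\to M_2^-}\phi = \infty$, and suppose there exist $x_1 < x_2$ in $(M_1,M_2)$ such that $\phi$ is increasing on $(M_1,x_1)$, decreasing on $(x_1,x_2)$, and increasing on $(x_2,M_2)$. Then the mixture $g = p f_1 + (1-p) f_2$, $p\in(0,1)$, is bimodal if and only if $p \in (p_1, p_2)$ where $1/p_i = 1 + \phi(x_i)$ for $i = 1, 2$. -/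
open Set Filter

section helpers

lemma glue_mono {g : ℝ → ℝ} {s t : Set ℝ} {w : ℝ} (hs : StrictMonoOn g s)
    (ht : StrictMonoOn g t) (hws : w ∈ s) (hwt : w ∈ t)
    (hsw : ∀ x ∈ s, x ≤ w) (htw : ∀ x ∈ t, w ≤ x) : StrictMonoOn g (s ∪ t) := by
  intro a ha b hb hab
  rcases ha with ha | ha <;> rcases hb with hb | hb
  · exact hs ha hb hab
  · rcases eq_or_lt_of_le (hsw a ha) with h | h
    · exact h ▸ ht hwt hb (h ▸ hab)
    · calc g a < g w := hs ha hws h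
        _ ≤ g b := by
          rcases eq_or_lt_of_le (htw b hb) with h' | h'
          · exact h' ▸ le_rfl
          · exact (ht hwt hb h').le
  · exact absurd hab (not_lt.2 ((hsw b hb).trans (htw a ha)))
  · exact ht ha hb hab

lemma glue_anti {g : ℝ → ℝ} {s t : Set ℝ} {w : ℝ} (hs : StrictAntiOn g s)
    (ht : StrictAntiOn g t) (hws : w ∈ s) (hwt : w ∈ t)
    (hsw : ∀ x ∈ s, x ≤ w) (htw : ∀ x ∈ t, w ≤ x) : StrictAntiOn g (s ∪ t) := by
  intro a ha b hb hab
  rcases ha with ha | ha <;> rcases hb with hb | hb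
  · exact hs ha hb hab
  · rcases eq_or_lt_of_le (hsw a ha) with h | h
    · exact h ▸ ht hwt hb (h ▸ hab)
    · have h2 : g b ≤ g w := by
        rcases eq_or_lt_of_le (htw b hb) with h' | h'
        · exact h' ▸ le_rfl
        · exact (ht hwt hb h').le
      exact lt_of_le_of_lt h2 (hs ha hws h)
  · exact absurd hab (not_lt.2 ((hsw b hb).trans (htw a ha)))
  · exact ht ha hb hab

lemma nomax_right {g : ℝ → ℝ} {s : Set ℝ} {x c : ℝ} (h : StrictMonoOn g s)
    (hc : x < c) (hsub : Set.Icc x c ⊆ s) : ¬ IsLocalMax g x := by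
  intro hmax
  have hmax' : ∀ᶠ y in nhds x, g y ≤ g x := hmax
  obtain ⟨ε, hε, hb⟩ := Metric.eventually_nhds_iff.1 hmax'
  have hxy : x < min c (x + ε / 2) := lt_min hc (by linarith)
  have h1 : g x < g (min c (x + ε / 2)) :=
    h (hsub ⟨le_rfl, hc.le⟩) (hsub ⟨hxy.le, min_le_left _ _⟩) hxy
  have h2 : g (min c (x + ε / 2)) ≤ g x := by
    refine hb ?_
    rw [Real.dist_eq, abs_of_pos (sub_pos.2 hxy)]
    have : min c (x + ε / 2) ≤ x + ε / 2 := min_le_right _ _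
    linarith
  linarith

lemma nomax_left {g : ℝ → ℝ} {s : Set ℝ} {x c : ℝ} (h : StrictAntiOn g s)
    (hc : c < x) (hsub : Set.Icc c x ⊆ s) : ¬ IsLocalMax g x := by
  intro hmax
  have hmax' : ∀ᶠ y in nhds x, g y ≤ g x := hmax
  obtain ⟨ε, hε, hb⟩ := Metric.eventually_nhds_iff.1 hmax'
  have hxy : max c (x - ε / 2) < x := max_lt hc (by linarith)
  have h1 : g x < g (max c (x - ε / 2)) :=
    h (hsub ⟨le_max_left _ _, hxy.le⟩) (hsub ⟨hc.le, le_rfl⟩) hxy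
  have h2 : g (max c (x - ε / 2)) ≤ g x := by
    refine hb ?_
    rw [Real.dist_eq, abs_of_neg (sub_neg.2 hxy)]
    have : x - ε / 2 ≤ max c (x - ε / 2) := le_max_right _ _
    linarith
  linarith

lemma ismax_of {g : ℝ → ℝ} {a ε : ℝ} (hε : 0 < ε)
    (hL : ∀ y, a - ε < y → y < a → g y ≤ g a)
    (hR : ∀ y, a < y → y < a + ε → g y ≤ g a) : IsLocalMax g a := by
  have : ∀ᶠ y in nhds a, g y ≤ g a := by
    refine Metric.eventually_nhds_iff.2 ⟨ε, hε, fun y hy => ?_⟩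
    rw [Real.dist_eq, abs_lt] at hy
    rcases lt_trichotomy y a with h | h | h
    · exact hL y (by linarith [hy.1]) h
    · exact h ▸ le_rfl
    · exact hR y h (by linarith [hy.2])
  exact this

lemma deriv_nonpos_of_strictAntiOn {f : ℝ → ℝ} {M y : ℝ} (hd : Differentiable ℝ f)
    (h : StrictAntiOn f (Set.Ici M)) (hy : M ≤ y) : deriv f y ≤ 0 := by
  have hs : Filter.Tendsto (slope f y) (nhdsWithin y {y}ᶜ) (nhds (deriv f y)) :=
    hasDerivAt_iff_tendsto_slope.1 (hd y).hasDerivAt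
  have hs' : Filter.Tendsto (slope f y) (nhdsWithin y (Set.Ioi y)) (nhds (deriv f y)) :=
    hs.mono_left (nhdsWithin_mono _ (fun z hz => ne_of_gt hz))
  refine le_of_tendsto hs' ?_
  filter_upwards [eventually_mem_nhdsWithin] with z hz
  have hfz : f z < f y := h hy (hy.trans (le_of_lt hz)) hz
  have hz' : y < z := hz
  rw [slope_def_field]
  apply div_nonpos_of_nonpos_of_nonneg
  · linarith
  · linarith

lemma deriv_nonneg_of_strictMonoOn {f : ℝ → ℝ} {M y : ℝ} (hd : Differentiable ℝ f)
    (h : StrictMonoOn f (Set.Iic M)) (hy : y ≤ M) : 0 ≤ deriv f y := by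
  have hs : Filter.Tendsto (slope f y) (nhdsWithin y {y}ᶜ) (nhds (deriv f y)) :=
    hasDerivAt_iff_tendsto_slope.1 (hd y).hasDerivAt
  have hs' : Filter.Tendsto (slope f y) (nhdsWithin y (Set.Iio y)) (nhds (deriv f y)) :=
    hs.mono_left (nhdsWithin_mono _ (fun z hz => ne_of_lt hz))
  refine ge_of_tendsto hs' ?_
  filter_upwards [eventually_mem_nhdsWithin] with z hz
  have hfz : f z < f y := h ((le_of_lt hz).trans hy) hy hz
  have hz' : z < y := hz
  rw [slope_def_field, show f z - f y = -(f y - f z) by ring, show z - y = -(y - z) by ring,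
    neg_div_neg_eq]
  exact div_nonneg (by linarith) (by linarith)
end helpers

/-- A density is bimodal if it has exactly two local maxima. -/
def Bimodal (g : ℝ → ℝ) : Prop :=
  ∃ x₁ x₂ : ℝ, x₁ < x₂ ∧ IsLocalMax g x₁ ∧ IsLocalMax g x₂ ∧
    ∀ x : ℝ, IsLocalMax g x → x = x₁ ∨ x = x₂

lemma not_bimodal_single {g : ℝ → ℝ} {m : ℝ} (SM : StrictMonoOn g (Set.Iic m))
    (SA : StrictAntiOn g (Set.Ici m)) : ¬ Bimodal g := by
  rintro ⟨u, v, huv, hu, hv, -⟩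
  have key : ∀ x, IsLocalMax g x → x = m := by
    intro x hx
    rcases lt_trichotomy x m with h | h | h
    · exact absurd hx (nomax_right SM h (fun z hz => hz.2))
    · exact h
    · exact absurd hx (nomax_left SA h (fun z hz => hz.1))
  rw [key u hu, key v hv] at huv
  exact lt_irrefl m huv

/-- Došlá's bimodality criterion for two-component mixtures. -/
theorem stmt_7 (f₁ f₂ : ℝ → ℝ) (M₁ M₂ : ℝ) (hlt : M₁ < M₂)
    (hd₁ : Differentiable ℝ f₁) (hd₂ : Differentiable ℝ f₂)
    (huni₁ : StrictMonoOn f₁ (Set.Iic M₁) ∧ StrictAntiOn f₁ (Set.Ici M₁))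
    (huni₂ : StrictMonoOn f₂ (Set.Iic M₂) ∧ StrictAntiOn f₂ (Set.Ici M₂))
    (φ : ℝ → ℝ) (hφ : ∀ y ∈ Set.Ioo M₁ M₂, φ y = |deriv f₁ y / deriv f₂ y|)
    (hcont : ContinuousOn φ (Set.Ioo M₁ M₂))
    (h0 : Filter.Tendsto φ (nhdsWithin M₁ (Set.Ioo M₁ M₂)) (nhds 0))
    (hinfty : Filter.Tendsto φ (nhdsWithin M₂ (Set.Ioo M₁ M₂)) Filter.atTop)
    (x₁ x₂ : ℝ) (hx₁ : M₁ < x₁) (hx₁₂ : x₁ < x₂) (hx₂ : x₂ < M₂)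
    (hmono₁ : StrictMonoOn φ (Set.Ioo M₁ x₁))
    (hanti : StrictAntiOn φ (Set.Ioo x₁ x₂))
    (hmono₂ : StrictMonoOn φ (Set.Ioo x₂ M₂))
    (p p₁ p₂ : ℝ) (hp : p ∈ Set.Ioo (0 : ℝ) 1)
    (hp₁ : 1 / p₁ = 1 + φ x₁) (hp₂ : 1 / p₂ = 1 + φ x₂) :
    Bimodal (fun y => p * f₁ y + (1 - p) * f₂ y) ↔ p ∈ Set.Ioo p₁ p₂ := by
  obtain ⟨hp0, hp1⟩ := hp
  obtain ⟨hm₁, ha₁⟩ := huni₁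
  obtain ⟨hm₂, ha₂⟩ := huni₂
  have h1p : (0:ℝ) < 1 - p := by linarith
  set G : ℝ → ℝ := fun y => p * f₁ y + (1 - p) * f₂ y with hGdef
  set r : ℝ := (1 - p) / p with hrdef
  have hr0 : 0 < r := div_pos h1p hp0
  have hre : r = 1 / p - 1 := by
    rw [hrdef]; field_simp
  have hx₁M : x₁ < M₂ := hx₁₂.trans hx₂
  have hx₂M : M₁ < x₂ := hx₁.trans hx₁₂
  -- basic derivative facts
  have hGdiff : Differentiable ℝ G := (hd₁.const_mul p).add (hd₂.const_mul (1 - p))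
  have hGcont : Continuous G := hGdiff.continuous
  have hGderiv : ∀ y, deriv G y = p * deriv f₁ y + (1 - p) * deriv f₂ y := by
    intro y
    have h1 : HasDerivAt (fun y => p * f₁ y) (p * deriv f₁ y) y :=
      ((hd₁ y).hasDerivAt).const_mul p
    have h2 : HasDerivAt (fun y => (1 - p) * f₂ y) ((1 - p) * deriv f₂ y) y :=
      ((hd₂ y).hasDerivAt).const_mul (1 - p)
    exact (h1.add h2).deriv
  -- nonnegativity of φ on the interval
  have hφ0 : ∀ y ∈ Set.Ioo M₁ M₂, 0 ≤ φ y := fun y hy => (hφ y hy) ▸ abs_nonneg _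
  -- sign of deriv G from φ
  have hsign : ∀ y, M₁ < y → y < M₂ → 0 < φ y →
      ((φ y < r → 0 < deriv G y) ∧ (r < φ y → deriv G y < 0)) := by
    intro y h1 h2 h3
    have e := hφ y ⟨h1, h2⟩
    have hA : deriv f₁ y ≤ 0 := deriv_nonpos_of_strictAntiOn hd₁ ha₁ h1.le
    have hB : 0 ≤ deriv f₂ y := deriv_nonneg_of_strictMonoOn hd₂ hm₂ h2.le
    have hB' : deriv f₂ y ≠ 0 := by
      intro h; rw [h, div_zero, abs_zero] at e; rw [e] at h3; exact lt_irrefl 0 h3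
    have hA' : deriv f₁ y ≠ 0 := by
      intro h; rw [h, zero_div, abs_zero] at e; rw [e] at h3; exact lt_irrefl 0 h3
    have hBpos : 0 < deriv f₂ y := lt_of_le_of_ne hB (Ne.symm hB')
    have hAneg : deriv f₁ y < 0 := lt_of_le_of_ne hA hA'
    have e2 : φ y = -deriv f₁ y / deriv f₂ y := by
      rw [e, abs_div, abs_of_neg hAneg, abs_of_pos hBpos]
    constructor
    · intro h
      rw [e2, hrdef, div_lt_div_iff₀ hBpos hp0] at h
      rw [hGderiv]; nlinarith
    · intro h
      rw [e2, hrdef, div_lt_div_iff₀ hp0 hBpos] at h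
      rw [hGderiv]; nlinarith
  -- positivity of φ on the three open pieces
  have hpos₁ : ∀ y ∈ Set.Ioo M₁ x₁, 0 < φ y := by
    intro y hy
    have hz : (M₁ + y) / 2 ∈ Set.Ioo M₁ x₁ :=
      ⟨by linarith [hy.1], by linarith [hy.1, hy.2]⟩
    have h1 : φ ((M₁ + y) / 2) < φ y := hmono₁ hz hy (by linarith [hy.1])
    have h2 : 0 ≤ φ ((M₁ + y) / 2) :=
      hφ0 _ ⟨hz.1, hz.2.trans hx₁M⟩
    linarith
  have hpos₂ : ∀ y ∈ Set.Ioo x₁ x₂, 0 < φ y := by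
    intro y hy
    have hz : (y + x₂) / 2 ∈ Set.Ioo x₁ x₂ :=
      ⟨by linarith [hy.1, hy.2], by linarith [hy.2]⟩
    have h1 : φ ((y + x₂) / 2) < φ y := hanti hy hz (by linarith [hy.2])
    have h2 : 0 ≤ φ ((y + x₂) / 2) :=
      hφ0 _ ⟨hx₁.trans hz.1, hz.2.trans hx₂⟩
    linarith
  have hpos₃ : ∀ y ∈ Set.Ioo x₂ M₂, 0 < φ y := by
    intro y hy
    have hz : (x₂ + y) / 2 ∈ Set.Ioo x₂ M₂ :=
      ⟨by linarith [hy.1], by linarith [hy.1, hy.2]⟩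
    have h1 : φ ((x₂ + y) / 2) < φ y := hmono₂ hz hy (by linarith [hy.1])
    have h2 : 0 ≤ φ ((x₂ + y) / 2) :=
      hφ0 _ ⟨hx₂M.trans hz.1, hz.2⟩
    linarith
  -- continuity at the two junction points
  have hcx₁ : Filter.Tendsto φ (nhdsWithin x₁ (Set.Ioo M₁ M₂)) (nhds (φ x₁)) :=
    hcont x₁ ⟨hx₁, hx₁M⟩
  have hcx₂ : Filter.Tendsto φ (nhdsWithin x₂ (Set.Ioo M₁ M₂)) (nhds (φ x₂)) :=
    hcont x₂ ⟨hx₂M, hx₂⟩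
  -- boundary comparison facts
  have hC1 : ∀ z ∈ Set.Ioo M₁ x₁, φ z < φ x₁ := by
    intro z hz
    have hw : (z + x₁) / 2 ∈ Set.Ioo M₁ x₁ :=
      ⟨by linarith [hz.1, hz.2], by linarith [hz.2]⟩
    have hzw : z < (z + x₁) / 2 := by linarith [hz.2]
    have hT : Filter.Tendsto φ (nhdsWithin x₁ (Set.Ioo ((z + x₁) / 2) x₁)) (nhds (φ x₁)) :=
      hcx₁.mono_left (nhdsWithin_mono _
        (Set.Ioo_subset_Ioo hw.1.le hx₁M.le))
    haveI := right_nhdsWithin_Ioo_neBot hw.2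
    have hge : φ ((z + x₁) / 2) ≤ φ x₁ := by
      refine ge_of_tendsto hT ?_
      filter_upwards [eventually_mem_nhdsWithin] with u hu
      exact (hmono₁ hw ⟨hw.1.trans hu.1, hu.2⟩ hu.1).le
    exact lt_of_lt_of_le (hmono₁ hz hw hzw) hge
  have hC2 : ∀ z ∈ Set.Ioo x₁ x₂, φ z < φ x₁ := by
    intro z hz
    have hw : (x₁ + z) / 2 ∈ Set.Ioo x₁ x₂ :=
      ⟨by linarith [hz.1], by linarith [hz.1, hz.2]⟩
    have hwz : (x₁ + z) / 2 < z := by linarith [hz.1]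
    have hT : Filter.Tendsto φ (nhdsWithin x₁ (Set.Ioo x₁ ((x₁ + z) / 2))) (nhds (φ x₁)) :=
      hcx₁.mono_left (nhdsWithin_mono _
        (fun u hu => ⟨hx₁.trans hu.1, (hu.2.trans hw.2).trans hx₂⟩))
    haveI := left_nhdsWithin_Ioo_neBot hw.1
    have hge : φ ((x₁ + z) / 2) ≤ φ x₁ := by
      refine ge_of_tendsto hT ?_
      filter_upwards [eventually_mem_nhdsWithin] with u hu
      exact (hanti ⟨hu.1, hu.2.trans hw.2⟩ hw hu.2).le
    exact lt_of_lt_of_le (hanti hw hz hwz) hge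
  have hC3 : ∀ z ∈ Set.Ioo x₁ x₂, φ x₂ < φ z := by
    intro z hz
    have hw : (z + x₂) / 2 ∈ Set.Ioo x₁ x₂ :=
      ⟨by linarith [hz.1, hz.2], by linarith [hz.2]⟩
    have hzw : z < (z + x₂) / 2 := by linarith [hz.2]
    have hT : Filter.Tendsto φ (nhdsWithin x₂ (Set.Ioo ((z + x₂) / 2) x₂)) (nhds (φ x₂)) :=
      hcx₂.mono_left (nhdsWithin_mono _
        (fun u hu => ⟨hx₁.trans (hw.1.trans hu.1), hu.2.trans hx₂⟩))
    haveI := right_nhdsWithin_Ioo_neBot hw.2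
    have hle : φ x₂ ≤ φ ((z + x₂) / 2) := by
      refine le_of_tendsto hT ?_
      filter_upwards [eventually_mem_nhdsWithin] with u hu
      exact (hanti hw ⟨hw.1.trans hu.1, hu.2⟩ hu.1).le
    exact lt_of_le_of_lt hle (hanti hz hw hzw)
  have hC4 : ∀ z ∈ Set.Ioo x₂ M₂, φ x₂ < φ z := by
    intro z hz
    have hw : (x₂ + z) / 2 ∈ Set.Ioo x₂ M₂ :=
      ⟨by linarith [hz.1], by linarith [hz.1, hz.2]⟩
    have hwz : (x₂ + z) / 2 < z := by linarith [hz.1]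
    have hT : Filter.Tendsto φ (nhdsWithin x₂ (Set.Ioo x₂ ((x₂ + z) / 2))) (nhds (φ x₂)) :=
      hcx₂.mono_left (nhdsWithin_mono _
        (fun u hu => ⟨hx₂M.trans hu.1, (hu.2.trans hw.2)⟩))
    haveI := left_nhdsWithin_Ioo_neBot hw.1
    have hle : φ x₂ ≤ φ ((x₂ + z) / 2) := by
      refine le_of_tendsto hT ?_
      filter_upwards [eventually_mem_nhdsWithin] with u hu
      exact (hmono₂ ⟨hu.1, hu.2.trans hw.2⟩ hw hu.2).le
    exact lt_of_le_of_lt hle (hmono₂ hw hz hwz)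
  have hφx₁pos : 0 < φ x₁ := by
    have hm : (M₁ + x₁) / 2 ∈ Set.Ioo M₁ x₁ := ⟨by linarith, by linarith⟩
    exact lt_trans (hpos₁ _ hm) (hC1 _ hm)
  have hφx₂nonneg : 0 ≤ φ x₂ := by
    have hT : Filter.Tendsto φ (nhdsWithin x₂ (Set.Ioo x₁ x₂)) (nhds (φ x₂)) :=
      hcx₂.mono_left (nhdsWithin_mono _
        (fun u hu => ⟨hx₁.trans hu.1, hu.2.trans hx₂⟩))
    haveI := right_nhdsWithin_Ioo_neBot hx₁₂
    refine ge_of_tendsto hT ?_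
    filter_upwards [eventually_mem_nhdsWithin] with u hu
    exact hφ0 _ ⟨hx₁.trans hu.1, hu.2.trans hx₂⟩
  have hφx₁₂ : φ x₂ < φ x₁ := by
    have hm : (x₁ + x₂) / 2 ∈ Set.Ioo x₁ x₂ := ⟨by linarith, by linarith⟩
    exact lt_trans (hC3 _ hm) (hC2 _ hm)
  -- translate the p-interval conditions into conditions on r
  have hp₁pos : 0 < p₁ := one_div_pos.1 (by rw [hp₁]; linarith)
  have hp₂pos : 0 < p₂ := one_div_pos.1 (by rw [hp₂]; linarith)
  have h₁iff : p₁ < p ↔ r < φ x₁ := by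
    rw [← one_div_lt_one_div hp0 hp₁pos, hp₁, hre]
    constructor <;> intro h <;> linarith
  have h₂iff : p < p₂ ↔ φ x₂ < r := by
    rw [← one_div_lt_one_div hp₂pos hp0, hp₂, hre]
    constructor <;> intro h <;> linarith
  -- base monotonicity outside (M₁, M₂)
  have SMIic : StrictMonoOn G (Set.Iic M₁) := by
    intro a ha b hb hab
    have h1 := hm₁ ha hb hab
    have h2 := hm₂ (Set.mem_Iic.2 ((Set.mem_Iic.1 ha).trans hlt.le))
      (Set.mem_Iic.2 ((Set.mem_Iic.1 hb).trans hlt.le)) hab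
    exact add_lt_add (mul_lt_mul_of_pos_left h1 hp0) (mul_lt_mul_of_pos_left h2 h1p)
  have SAIci : StrictAntiOn G (Set.Ici M₂) := by
    intro a ha b hb hab
    have h1 := ha₁ (Set.mem_Ici.2 (hlt.le.trans ha)) (Set.mem_Ici.2 (hlt.le.trans hb)) hab
    have h2 := ha₂ ha hb hab
    exact add_lt_add (mul_lt_mul_of_pos_left h1 hp0) (mul_lt_mul_of_pos_left h2 h1p)
  -- segment monotonicity from derivative signs
  have mono_seg : ∀ u v : ℝ, (∀ y ∈ Set.Ioo u v, 0 < deriv G y) →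
      StrictMonoOn G (Set.Icc u v) := by
    intro u v h
    exact strictMonoOn_of_deriv_pos (convex_Icc u v) hGcont.continuousOn
      (by rwa [interior_Icc])
  have anti_seg : ∀ u v : ℝ, (∀ y ∈ Set.Ioo u v, deriv G y < 0) →
      StrictAntiOn G (Set.Icc u v) := by
    intro u v h
    exact strictAntiOn_of_deriv_neg (convex_Icc u v) hGcont.continuousOn
      (by rwa [interior_Icc])
  rcases lt_or_ge r (φ x₁) with hrx₁ | hrx₁
  · rcases lt_or_ge (φ x₂) r with hrx₂ | hrx₂
    · -- Case A : p₁ < p < p₂, the mixture is bimodal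
      refine iff_of_true ?_ ⟨h₁iff.2 hrx₁, h₂iff.2 hrx₂⟩
      -- the crossing point a ∈ (M₁, x₁)
      haveI nb1 := left_nhdsWithin_Ioo_neBot hx₁
      obtain ⟨z₀, hz₀r, hz₀⟩ := (((h0.mono_left (nhdsWithin_mono _
        (Set.Ioo_subset_Ioo le_rfl hx₁M.le))).eventually_lt_const hr0).and
        eventually_mem_nhdsWithin).exists
      haveI nb2 := right_nhdsWithin_Ioo_neBot hz₀.2
      obtain ⟨w₀, hw₀r, hw₀⟩ := (((hcx₁.mono_left (nhdsWithin_mono _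
        (Set.Ioo_subset_Ioo hz₀.1.le hx₁M.le))).eventually_const_lt hrx₁).and
        eventually_mem_nhdsWithin).exists
      obtain ⟨a, haz, har⟩ := intermediate_value_Ioo (le_of_lt hw₀.1) (hcont.mono
        (fun t ht => ⟨hz₀.1.trans_le ht.1, lt_of_le_of_lt ht.2 (hw₀.2.trans hx₁M)⟩))
        ⟨hz₀r, hw₀r⟩
      have haM : a ∈ Set.Ioo M₁ x₁ := ⟨hz₀.1.trans haz.1, haz.2.trans hw₀.2⟩
      -- the crossing point b ∈ (x₁, x₂)
      haveI nb3 := left_nhdsWithin_Ioo_neBot hx₁₂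
      obtain ⟨w₁, hw₁r, hw₁⟩ := (((hcx₁.mono_left (nhdsWithin_mono _
        (show Set.Ioo x₁ x₂ ⊆ Set.Ioo M₁ M₂ from
          fun u hu => ⟨hx₁.trans hu.1, hu.2.trans hx₂⟩))).eventually_const_lt hrx₁).and
        eventually_mem_nhdsWithin).exists
      haveI nb4 := right_nhdsWithin_Ioo_neBot hw₁.2
      obtain ⟨w₂, hw₂r, hw₂⟩ := (((hcx₂.mono_left (nhdsWithin_mono _
        (show Set.Ioo w₁ x₂ ⊆ Set.Ioo M₁ M₂ from
          fun u hu => ⟨hx₁.trans (hw₁.1.trans hu.1), hu.2.trans hx₂⟩))).eventually_lt_const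
        hrx₂).and eventually_mem_nhdsWithin).exists
      obtain ⟨b, hbz, hbr⟩ := intermediate_value_Ioo' (le_of_lt hw₂.1) (hcont.mono
        (fun t ht => ⟨hx₁.trans_le (hw₁.1.le.trans ht.1),
          lt_of_le_of_lt ht.2 (hw₂.2.trans hx₂)⟩)) ⟨hw₂r, hw₁r⟩
      have hbM : b ∈ Set.Ioo x₁ x₂ := ⟨hw₁.1.trans hbz.1, hbz.2.trans hw₂.2⟩
      -- the crossing point c ∈ (x₂, M₂)
      haveI nb5 := right_nhdsWithin_Ioo_neBot hx₂
      obtain ⟨w₃, hw₃r, hw₃⟩ := (((hinfty.mono_left (nhdsWithin_mono _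
        (show Set.Ioo x₂ M₂ ⊆ Set.Ioo M₁ M₂ from
          fun u hu => ⟨hx₂M.trans hu.1, hu.2⟩))).eventually (eventually_gt_atTop r)).and
        eventually_mem_nhdsWithin).exists
      haveI nb6 := left_nhdsWithin_Ioo_neBot hw₃.1
      obtain ⟨w₄, hw₄r, hw₄⟩ := (((hcx₂.mono_left (nhdsWithin_mono _
        (show Set.Ioo x₂ w₃ ⊆ Set.Ioo M₁ M₂ from
          fun u hu => ⟨hx₂M.trans hu.1, hu.2.trans hw₃.2⟩))).eventually_lt_const hrx₂).and
        eventually_mem_nhdsWithin).exists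
      obtain ⟨c, hcz, hcr⟩ := intermediate_value_Ioo hw₄.2.le (hcont.mono
        (fun t ht => ⟨hx₂M.trans (hw₄.1.trans_le ht.1), lt_of_le_of_lt ht.2 hw₃.2⟩))
        ⟨hw₄r, hw₃r⟩
      have hcM : c ∈ Set.Ioo x₂ M₂ := ⟨hw₄.1.trans hcz.1, hcz.2.trans hw₃.2⟩
      have hab : a < b := haM.2.trans hbM.1
      have hbc : b < c := hbM.2.trans hcM.1
      -- derivative signs
      have hS1 : ∀ y ∈ Set.Ioo M₁ a, 0 < deriv G y := by
        intro y hy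
        have hyx : y ∈ Set.Ioo M₁ x₁ := ⟨hy.1, hy.2.trans haM.2⟩
        have h := har ▸ hmono₁ hyx haM hy.2
        exact (hsign y hy.1 (hyx.2.trans hx₁M) (hpos₁ y hyx)).1 h
      have hS2 : ∀ y ∈ Set.Ioo a b, deriv G y < 0 := by
        intro y hy
        have hyM : M₁ < y := haM.1.trans hy.1
        have hyM₂ : y < M₂ := hy.2.trans (hbM.2.trans hx₂)
        rcases lt_trichotomy y x₁ with h | h | h
        · have hym : y ∈ Set.Ioo M₁ x₁ := ⟨hyM, h⟩
          have h' : r < φ y := har ▸ hmono₁ haM hym hy.1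
          exact (hsign y hyM hyM₂ (hr0.trans h')).2 h'
        · subst h
          exact (hsign y hyM hyM₂ hφx₁pos).2 hrx₁
        · have hym : y ∈ Set.Ioo x₁ x₂ := ⟨h, hy.2.trans hbM.2⟩
          have h' : r < φ y := hbr ▸ hanti hym hbM hy.2
          exact (hsign y hyM hyM₂ (hr0.trans h')).2 h'
      have hS3 : ∀ y ∈ Set.Ioo b x₂, 0 < deriv G y := by
        intro y hy
        have hym : y ∈ Set.Ioo x₁ x₂ := ⟨hbM.1.trans hy.1, hy.2⟩
        have h := hbr ▸ hanti hbM hym hy.1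
        exact (hsign y (hx₁.trans hym.1) (hy.2.trans hx₂) (hpos₂ y hym)).1 h
      have hS4 : ∀ y ∈ Set.Ioo x₂ c, 0 < deriv G y := by
        intro y hy
        have hym : y ∈ Set.Ioo x₂ M₂ := ⟨hy.1, hy.2.trans hcM.2⟩
        have h := hcr ▸ hmono₂ hym hcM hy.2
        exact (hsign y (hx₂M.trans hy.1) hym.2 (hpos₃ y hym)).1 h
      have hS5 : ∀ y ∈ Set.Ioo c M₂, deriv G y < 0 := by
        intro y hy
        have hym : y ∈ Set.Ioo x₂ M₂ := ⟨hcM.1.trans hy.1, hy.2⟩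
        have h : r < φ y := hcr ▸ hmono₂ hcM hym hy.1
        exact (hsign y (hx₂M.trans hym.1) hy.2 (hr0.trans h)).2 h
      -- monotonicity pieces
      have SM1 : StrictMonoOn G (Set.Iic a) := by
        have h := glue_mono SMIic (mono_seg M₁ a hS1) (Set.mem_Iic.2 le_rfl)
          (Set.mem_Icc.2 ⟨le_rfl, haM.1.le⟩) (fun x hx => hx) (fun x hx => hx.1)
        rwa [Set.Iic_union_Icc_eq_Iic haM.1.le] at h
      have SA1 : StrictAntiOn G (Set.Icc a b) := anti_seg a b hS2
      have SM2 : StrictMonoOn G (Set.Icc b c) := by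
        have h := glue_mono (mono_seg b x₂ hS3) (mono_seg x₂ c hS4)
          (Set.mem_Icc.2 ⟨hbM.2.le, le_rfl⟩) (Set.mem_Icc.2 ⟨le_rfl, hcM.1.le⟩)
          (fun x hx => hx.2) (fun x hx => hx.1)
        rwa [Set.Icc_union_Icc_eq_Icc hbM.2.le hcM.1.le] at h
      have SA2 : StrictAntiOn G (Set.Ici c) := by
        have h := glue_anti (anti_seg c M₂ hS5) SAIci
          (Set.mem_Icc.2 ⟨hcM.2.le, le_rfl⟩) (Set.mem_Ici.2 le_rfl)
          (fun x hx => hx.2) (fun x hx => hx)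
        rwa [Set.Icc_union_Ici_eq_Ici hcM.2.le] at h
      refine ⟨a, c, hab.trans hbc, ?_, ?_, ?_⟩
      · refine ismax_of (show (0:ℝ) < b - a by linarith) ?_ ?_
        · intro y _ hy
          exact (SM1 hy.le Set.self_mem_Iic hy).le
        · intro y hy hy2
          exact (SA1 ⟨le_rfl, hab.le⟩ ⟨hy.le, by linarith⟩ hy).le
      · refine ismax_of (show (0:ℝ) < c - b by linarith) ?_ ?_
        · intro y hy1 hy2
          exact (SM2 ⟨by linarith, hy2.le⟩ ⟨hbc.le, le_rfl⟩ hy2).le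
        · intro y hy _
          exact (SA2 Set.self_mem_Ici hy.le hy).le
      · intro x hx
        rcases lt_trichotomy x a with h | h | h
        · exact absurd hx (nomax_right SM1 h (fun z hz => hz.2))
        · exact Or.inl h
        · rcases le_or_gt x b with h2 | h2
          · exact absurd hx (nomax_left SA1 h (fun z hz => ⟨hz.1, hz.2.trans h2⟩))
          · rcases lt_trichotomy x c with h3 | h3 | h3
            · exact absurd hx (nomax_right SM2 h3 (fun z hz => ⟨h2.le.trans hz.1, hz.2⟩))
            · exact Or.inr h3
            · exact absurd hx (nomax_left SA2 h3 (fun z hz => hz.1))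
    · -- Case B : p₂ ≤ p, single mode, not bimodal
      refine iff_of_false ?_ (fun hmem => absurd (h₂iff.1 hmem.2) (not_lt.2 hrx₂))
      -- crossing point a ∈ (M₁, x₁)
      haveI nb1 := left_nhdsWithin_Ioo_neBot hx₁
      obtain ⟨z₀, hz₀r, hz₀⟩ := (((h0.mono_left (nhdsWithin_mono _
        (Set.Ioo_subset_Ioo le_rfl hx₁M.le))).eventually_lt_const hr0).and
        eventually_mem_nhdsWithin).exists
      haveI nb2 := right_nhdsWithin_Ioo_neBot hz₀.2
      obtain ⟨w₀, hw₀r, hw₀⟩ := (((hcx₁.mono_left (nhdsWithin_mono _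
        (Set.Ioo_subset_Ioo hz₀.1.le hx₁M.le))).eventually_const_lt hrx₁).and
        eventually_mem_nhdsWithin).exists
      obtain ⟨a, haz, har⟩ := intermediate_value_Ioo (le_of_lt hw₀.1) (hcont.mono
        (fun t ht => ⟨hz₀.1.trans_le ht.1, lt_of_le_of_lt ht.2 (hw₀.2.trans hx₁M)⟩))
        ⟨hz₀r, hw₀r⟩
      have haM : a ∈ Set.Ioo M₁ x₁ := ⟨hz₀.1.trans haz.1, haz.2.trans hw₀.2⟩
      have hax₂ : a < x₂ := haM.2.trans hx₁₂
      -- derivative signs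
      have hS1 : ∀ y ∈ Set.Ioo M₁ a, 0 < deriv G y := by
        intro y hy
        have hyx : y ∈ Set.Ioo M₁ x₁ := ⟨hy.1, hy.2.trans haM.2⟩
        have h := har ▸ hmono₁ hyx haM hy.2
        exact (hsign y hy.1 (hyx.2.trans hx₁M) (hpos₁ y hyx)).1 h
      have hS2 : ∀ y ∈ Set.Ioo a x₂, deriv G y < 0 := by
        intro y hy
        have hyM : M₁ < y := haM.1.trans hy.1
        have hyM₂ : y < M₂ := hy.2.trans hx₂
        rcases lt_trichotomy y x₁ with h | h | h
        · have hym : y ∈ Set.Ioo M₁ x₁ := ⟨hyM, h⟩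
          have h' : r < φ y := har ▸ hmono₁ haM hym hy.1
          exact (hsign y hyM hyM₂ (hr0.trans h')).2 h'
        · subst h
          exact (hsign y hyM hyM₂ hφx₁pos).2 hrx₁
        · have h' : r < φ y := lt_of_le_of_lt hrx₂ (hC3 y ⟨h, hy.2⟩)
          exact (hsign y hyM hyM₂ (hr0.trans h')).2 h'
      have hS3 : ∀ y ∈ Set.Ioo x₂ M₂, deriv G y < 0 := by
        intro y hy
        have h' : r < φ y := lt_of_le_of_lt hrx₂ (hC4 y hy)
        exact (hsign y (hx₂M.trans hy.1) hy.2 (hr0.trans h')).2 h'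
      have SM1 : StrictMonoOn G (Set.Iic a) := by
        have h := glue_mono SMIic (mono_seg M₁ a hS1) (Set.mem_Iic.2 le_rfl)
          (Set.mem_Icc.2 ⟨le_rfl, haM.1.le⟩) (fun x hx => hx) (fun x hx => hx.1)
        rwa [Set.Iic_union_Icc_eq_Iic haM.1.le] at h
      have SA0 : StrictAntiOn G (Set.Ici x₂) := by
        have h := glue_anti (anti_seg x₂ M₂ hS3) SAIci
          (Set.mem_Icc.2 ⟨hx₂.le, le_rfl⟩) (Set.mem_Ici.2 le_rfl)
          (fun x hx => hx.2) (fun x hx => hx)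
        rwa [Set.Icc_union_Ici_eq_Ici hx₂.le] at h
      have SA1 : StrictAntiOn G (Set.Ici a) := by
        have h := glue_anti (anti_seg a x₂ hS2) SA0
          (Set.mem_Icc.2 ⟨hax₂.le, le_rfl⟩) (Set.mem_Ici.2 le_rfl)
          (fun x hx => hx.2) (fun x hx => hx)
        rwa [Set.Icc_union_Ici_eq_Ici hax₂.le] at h
      exact not_bimodal_single SM1 SA1
  · -- Case C : p ≤ p₁, single mode, not bimodal
    refine iff_of_false ?_ (fun hmem => absurd (h₁iff.1 hmem.1) (not_lt.2 hrx₁))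
    have hrx₂' : φ x₂ < r := hφx₁₂.trans_le hrx₁
    -- crossing point c ∈ (x₂, M₂)
    haveI nb5 := right_nhdsWithin_Ioo_neBot hx₂
    obtain ⟨w₃, hw₃r, hw₃⟩ := (((hinfty.mono_left (nhdsWithin_mono _
      (show Set.Ioo x₂ M₂ ⊆ Set.Ioo M₁ M₂ from
        fun u hu => ⟨hx₂M.trans hu.1, hu.2⟩))).eventually (eventually_gt_atTop r)).and
      eventually_mem_nhdsWithin).exists
    haveI nb6 := left_nhdsWithin_Ioo_neBot hw₃.1
    obtain ⟨w₄, hw₄r, hw₄⟩ := (((hcx₂.mono_left (nhdsWithin_mono _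
      (show Set.Ioo x₂ w₃ ⊆ Set.Ioo M₁ M₂ from
        fun u hu => ⟨hx₂M.trans hu.1, hu.2.trans hw₃.2⟩))).eventually_lt_const hrx₂').and
      eventually_mem_nhdsWithin).exists
    obtain ⟨c, hcz, hcr⟩ := intermediate_value_Ioo hw₄.2.le (hcont.mono
      (fun t ht => ⟨hx₂M.trans (hw₄.1.trans_le ht.1), lt_of_le_of_lt ht.2 hw₃.2⟩))
      ⟨hw₄r, hw₃r⟩
    have hcM : c ∈ Set.Ioo x₂ M₂ := ⟨hw₄.1.trans hcz.1, hcz.2.trans hw₃.2⟩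
    -- derivative signs
    have hT1 : ∀ y ∈ Set.Ioo M₁ x₁, 0 < deriv G y := by
      intro y hy
      have h' : φ y < r := lt_of_lt_of_le (hC1 y hy) hrx₁
      exact (hsign y hy.1 (hy.2.trans hx₁M) (hpos₁ y hy)).1 h'
    have hT2 : ∀ y ∈ Set.Ioo x₁ x₂, 0 < deriv G y := by
      intro y hy
      have h' : φ y < r := lt_of_lt_of_le (hC2 y hy) hrx₁
      exact (hsign y (hx₁.trans hy.1) (hy.2.trans hx₂) (hpos₂ y hy)).1 h'
    have hT3 : ∀ y ∈ Set.Ioo x₂ c, 0 < deriv G y := by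
      intro y hy
      have hym : y ∈ Set.Ioo x₂ M₂ := ⟨hy.1, hy.2.trans hcM.2⟩
      have h := hcr ▸ hmono₂ hym hcM hy.2
      exact (hsign y (hx₂M.trans hy.1) hym.2 (hpos₃ y hym)).1 h
    have hT4 : ∀ y ∈ Set.Ioo c M₂, deriv G y < 0 := by
      intro y hy
      have hym : y ∈ Set.Ioo x₂ M₂ := ⟨hcM.1.trans hy.1, hy.2⟩
      have h : r < φ y := hcr ▸ hmono₂ hcM hym hy.1
      exact (hsign y (hx₂M.trans hym.1) hy.2 (hr0.trans h)).2 h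
    have SMa : StrictMonoOn G (Set.Iic x₁) := by
      have h := glue_mono SMIic (mono_seg M₁ x₁ hT1) (Set.mem_Iic.2 le_rfl)
        (Set.mem_Icc.2 ⟨le_rfl, hx₁.le⟩) (fun x hx => hx) (fun x hx => hx.1)
      rwa [Set.Iic_union_Icc_eq_Iic hx₁.le] at h
    have SMb : StrictMonoOn G (Set.Iic x₂) := by
      have h := glue_mono SMa (mono_seg x₁ x₂ hT2) (Set.mem_Iic.2 le_rfl)
        (Set.mem_Icc.2 ⟨le_rfl, hx₁₂.le⟩) (fun x hx => hx) (fun x hx => hx.1)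
      rwa [Set.Iic_union_Icc_eq_Iic hx₁₂.le] at h
    have SMc : StrictMonoOn G (Set.Iic c) := by
      have h := glue_mono SMb (mono_seg x₂ c hT3) (Set.mem_Iic.2 le_rfl)
        (Set.mem_Icc.2 ⟨le_rfl, hcM.1.le⟩) (fun x hx => hx) (fun x hx => hx.1)
      rwa [Set.Iic_union_Icc_eq_Iic hcM.1.le] at h
    have SAc : StrictAntiOn G (Set.Ici c) := by
      have h := glue_anti (anti_seg c M₂ hT4) SAIci
        (Set.mem_Icc.2 ⟨hcM.2.le, le_rfl⟩) (Set.mem_Ici.2 le_rfl)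
        (fun x hx => hx.2) (fun x hx => hx)
      rwa [Set.Icc_union_Ici_eq_Ici hcM.2.le] at h
    exact not_bimodal_single SMc SAc
end
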